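/- Let ρ(x) = a x + b x³ + c x⁵ with a = 3.4445, b = −4.7750, c = 2.0315. Then the derivative ρ'(x) = a + 3b x² + 5c x⁴ has exactly two zeros in (0, ∞): one located in the interval (0.554, 0.555) (a local maximum of ρ) and one located in the interval (1.050, 1.051) (a local minimum of ρ); moreover ρ' > 0 on [0, 0.554] and ρ' < 0 on [0.56, 1.04]. -/

import Mathlib

/-- The base Muon Newton–Schulz polynomial ρ(x) = a x + b x³ + c x⁵ with
a = 3.4445, b = −4.7750, c = 2.0315. -/
noncomputable def ρ (x : ℝ) : ℝ := 3.4445 * x + (-4.7750) * x ^ 3 + 2.0315 * x ^ 5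

/-- The derivative ρ'(x) = a + 3b x² + 5c x⁴ of the Muon Newton–Schulz polynomial. -/
noncomputable def ρ' (x : ℝ) : ℝ := 3.4445 + 3 * (-4.7750) * x ^ 2 + 5 * 2.0315 * x ^ 4

lemma rho_hasDerivAt (x : ℝ) : HasDerivAt ρ (ρ' x) x := by
  have h : HasDerivAt (fun x : ℝ => 3.4445 * x + (-4.7750) * x ^ 3 + 2.0315 * x ^ 5)
      (3.4445 * 1 + (-4.7750) * (↑(3:ℕ) * x ^ 2) + 2.0315 * (↑(5:ℕ) * x ^ 4)) x := by
    exact (((hasDerivAt_id x).const_mul _).add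
      (((hasDerivAt_pow 3 x)).const_mul _)).add (((hasDerivAt_pow 5 x)).const_mul _)
  convert h using 1
  · rfl
  unfold ρ'
  push_cast
  ring

lemma rho_deriv (x : ℝ) : deriv ρ x = ρ' x := (rho_hasDerivAt x).deriv

lemma rho'_cont : Continuous ρ' := by
  unfold ρ'
  continuity

set_option maxHeartbeats 1000000 in
/-- ρ' has exactly two zeros in (0, ∞): one in (0.554, 0.555), which is a local maximum
of ρ, and one in (1.050, 1.051), which is a local minimum of ρ; moreover ρ' > 0 on
[0, 0.554] and ρ' < 0 on [0.56, 1.04]. -/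
theorem stmt_19 :
    ∃ x₁ ∈ Set.Ioo (0.554 : ℝ) 0.555, ∃ x₂ ∈ Set.Ioo (1.050 : ℝ) 1.051,
      ρ' x₁ = 0 ∧ ρ' x₂ = 0 ∧
      (∀ x ∈ Set.Ioi (0 : ℝ), ρ' x = 0 → x = x₁ ∨ x = x₂) ∧
      IsLocalMax ρ x₁ ∧ IsLocalMin ρ x₂ ∧
      (∀ x ∈ Set.Icc (0 : ℝ) 0.554, 0 < ρ' x) ∧
      (∀ x ∈ Set.Icc (0.56 : ℝ) 1.04, ρ' x < 0) := by
  have h554 : (0:ℝ) < ρ' 0.554 := by norm_num [ρ']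
  have h555 : ρ' 0.555 < 0 := by norm_num [ρ']
  have h1050 : ρ' 1.050 < 0 := by norm_num [ρ']
  have h1051 : (0:ℝ) < ρ' 1.051 := by norm_num [ρ']
  obtain ⟨x₁, hx₁, e₁⟩ := intermediate_value_Ioo' (by norm_num : (0.554:ℝ) ≤ 0.555)
    rho'_cont.continuousOn ⟨h555, h554⟩
  obtain ⟨x₂, hx₂, e₂⟩ := intermediate_value_Ioo (by norm_num : (1.050:ℝ) ≤ 1.051)
    rho'_cont.continuousOn ⟨h1050, h1051⟩
  obtain ⟨hx₁l, hx₁r⟩ := hx₁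
  obtain ⟨hx₂l, hx₂r⟩ := hx₂
  have e₁' : 3.4445 + 3 * (-4.7750) * x₁ ^ 2 + 5 * 2.0315 * x₁ ^ 4 = 0 := e₁
  have e₂' : 3.4445 + 3 * (-4.7750) * x₂ ^ 2 + 5 * 2.0315 * x₂ ^ 4 = 0 := e₂
  have hsum : 10.1575 * (x₁ ^ 2 + x₂ ^ 2) = 14.325 := by
    have h : (x₁ ^ 2 - x₂ ^ 2) * (10.1575 * (x₁ ^ 2 + x₂ ^ 2) - 14.325) = 0 := by
      linear_combination e₁' - e₂'
    rcases mul_eq_zero.1 h with h | h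
    · exfalso; nlinarith
    · linarith
  have hprod : 10.1575 * (x₁ ^ 2 * x₂ ^ 2) = 3.4445 := by
    linear_combination -e₁' + x₁ ^ 2 * hsum
  have key : ∀ x : ℝ, ρ' x = 10.1575 * (x ^ 2 - x₁ ^ 2) * (x ^ 2 - x₂ ^ 2) := by
    intro x
    unfold ρ'
    linear_combination x ^ 2 * hsum - hprod
  refine ⟨x₁, ⟨hx₁l, hx₁r⟩, x₂, ⟨hx₂l, hx₂r⟩, e₁, e₂, ?_, ?_, ?_, ?_, ?_⟩
  · -- uniqueness
    intro x hx hz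
    rw [key x] at hz
    have hz' : (x ^ 2 - x₁ ^ 2) * (x ^ 2 - x₂ ^ 2) = 0 := by
      linear_combination hz / 10.1575
    have hx0 : (0:ℝ) < x := hx
    rcases mul_eq_zero.1 hz' with h | h
    · left
      have h' : (x - x₁) * (x + x₁) = 0 := by linear_combination h
      rcases mul_eq_zero.1 h' with h'' | h''
      · linarith [sub_eq_zero.1 h'']
      · exfalso; nlinarith
    · right
      have h' : (x - x₂) * (x + x₂) = 0 := by linear_combination h
      rcases mul_eq_zero.1 h' with h'' | h''
      · linarith [sub_eq_zero.1 h'']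
      · exfalso; nlinarith
  · -- local max
    apply isLocalMax_of_deriv_Ioo hx₁l hx₁r
    · exact (rho_hasDerivAt x₁).continuousAt
    · intro x hx
      exact ((rho_hasDerivAt x).differentiableAt).differentiableWithinAt
    · intro x hx
      exact ((rho_hasDerivAt x).differentiableAt).differentiableWithinAt
    · intro x hx
      rw [rho_deriv, key x]
      have h1 : x ^ 2 < x₁ ^ 2 := by nlinarith [hx.1, hx.2]
      have h2 : x ^ 2 < x₂ ^ 2 := by nlinarith [hx.1, hx.2]
      nlinarith [mul_pos (sub_pos.2 h1) (sub_pos.2 h2)]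
    · intro x hx
      rw [rho_deriv, key x]
      have h1 : x₁ ^ 2 < x ^ 2 := by nlinarith [hx.1, hx.2]
      have h2 : x ^ 2 < x₂ ^ 2 := by nlinarith [hx.1, hx.2]
      nlinarith [mul_pos (sub_pos.2 h1) (sub_pos.2 h2)]
  · -- local min
    apply isLocalMin_of_deriv_Ioo hx₂l hx₂r
    · exact (rho_hasDerivAt x₂).continuousAt
    · intro x hx
      exact ((rho_hasDerivAt x).differentiableAt).differentiableWithinAt
    · intro x hx
      exact ((rho_hasDerivAt x).differentiableAt).differentiableWithinAt
    · intro x hx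
      rw [rho_deriv, key x]
      have h1 : x₁ ^ 2 < x ^ 2 := by nlinarith [hx.1, hx.2]
      have h2 : x ^ 2 < x₂ ^ 2 := by nlinarith [hx.1, hx.2]
      nlinarith [mul_pos (sub_pos.2 h1) (sub_pos.2 h2)]
    · intro x hx
      rw [rho_deriv, key x]
      have h1 : x₁ ^ 2 < x ^ 2 := by nlinarith [hx.1, hx.2]
      have h2 : x₂ ^ 2 < x ^ 2 := by nlinarith [hx.1, hx.2]
      nlinarith [mul_pos (sub_pos.2 h1) (sub_pos.2 h2)]
  · -- positive on [0, 0.554]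
    intro x hx
    rw [key x]
    have h1 : x ^ 2 < x₁ ^ 2 := by nlinarith [hx.1, hx.2]
    have h2 : x ^ 2 < x₂ ^ 2 := by nlinarith [hx.1, hx.2]
    nlinarith [mul_pos (sub_pos.2 h1) (sub_pos.2 h2)]
  · -- negative on [0.56, 1.04]
    intro x hx
    rw [key x]
    have h1 : x₁ ^ 2 < x ^ 2 := by nlinarith [hx.1, hx.2]
    have h2 : x ^ 2 < x₂ ^ 2 := by nlinarith [hx.1, hx.2]
    nlinarith [mul_pos (sub_pos.2 h1) (sub_pos.2 h2)]
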